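/- Let L be a Lie conformal superalgebra with trivial center Z(L) = 0 and let A be a unital associative commutative ℂ-algebra with a basis {b_t : t ∈ T}. Suppose that every linear super-commuting map on L belongs to the centroid Cent(L). Then every homogeneous linear super-commuting map Ψ on the current Lie conformal superalgebra L ⊗ A belongs to Cent(L ⊗ A); in particular Ψ_λ[(u ⊗ a)_μ (v ⊗ b)] = (−1)^{|Ψ||u|}[(u ⊗ a)_μ Ψ_λ(v ⊗ b)] for all homogeneous u, v ∈ L and a, b ∈ A. -/

import Mathlib

open scoped TensorProduct

noncomputable section

/-- The sign `(−1)^i` for a parity `i : ZMod 2`. -/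
def sg (i : ZMod 2) : ℂ := if i = 0 then 1 else -1

/-- A finitely supported family `f : ℕ →₀ L` encodes the polynomial `∑ₙ λ^n • (f n)`
in `ℂ[λ] ⊗ L`; this evaluates it at `lam : ℂ`. -/
def evalPoly {L : Type*} [AddCommGroup L] [Module ℂ L] (lam : ℂ) (f : ℕ →₀ L) : L :=
  f.sum fun n c => lam ^ n • c

/-- Evaluation of the polynomial encoded by `f : ℕ →₀ L` at an operator `T`
(used to substitute expressions like `−λ−∂` for the formal variable). -/
def evalPolyOp {L : Type*} [AddCommGroup L] [Module ℂ L] (T : Module.End ℂ L)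
    (f : ℕ →₀ L) : L :=
  f.sum fun n c => (T ^ n) c

/-- A Lie conformal superalgebra: a `ℤ/2`-graded `ℂ[∂]`-module with a λ-bracket
`[x_λ y] = ∑ₙ λ^n • (coeff x y n)` satisfying conformal sesquilinearity, skew-symmetry
and the graded Jacobi identity. -/
structure LieConformalSuperAlgebra (L : Type*) [AddCommGroup L] [Module ℂ L] where
  /-- the operator `∂` -/
  D : L →ₗ[ℂ] L
  /-- the `ℤ/2`-grading `L = L₀ ⊕ L₁` -/
  grading : ZMod 2 → Submodule ℂ L
  isInternal : DirectSum.IsInternal grading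
  D_mem : ∀ (i : ZMod 2) (x : L), x ∈ grading i → D x ∈ grading i
  /-- coefficients of the λ-bracket: `[x_λ y] = ∑ₙ λ^n • coeff x y n` -/
  coeff : L →ₗ[ℂ] L →ₗ[ℂ] (ℕ →₀ L)
  coeff_mem : ∀ (i j : ZMod 2) (x y : L), x ∈ grading i → y ∈ grading j →
    ∀ n, coeff x y n ∈ grading (i + j)
  /-- `[∂x_λ y] = −λ [x_λ y]` -/
  sesq₁ : ∀ (lam : ℂ) (x y : L),
    evalPoly lam (coeff (D x) y) = (-lam) • evalPoly lam (coeff x y)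
  /-- `[x_λ ∂y] = (∂+λ) [x_λ y]` -/
  sesq₂ : ∀ (lam : ℂ) (x y : L),
    evalPoly lam (coeff x (D y)) = D (evalPoly lam (coeff x y)) + lam • evalPoly lam (coeff x y)
  /-- `[x_λ y] = −(−1)^{|x||y|} [y_{−λ−∂} x]` -/
  skew : ∀ (i j : ZMod 2) (x y : L), x ∈ grading i → y ∈ grading j → ∀ lam : ℂ,
    evalPoly lam (coeff x y)
      = -(sg (i * j)) • evalPolyOp ((-lam) • (1 : Module.End ℂ L) - D) (coeff y x)
  /-- `[x_λ [y_μ z]] = [[x_λ y]_{λ+μ} z] + (−1)^{|x||y|} [y_μ [x_λ z]]` -/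
  jacobi : ∀ (i j : ZMod 2) (x y z : L), x ∈ grading i → y ∈ grading j → ∀ lam mu : ℂ,
    evalPoly lam (coeff x (evalPoly mu (coeff y z)))
      = evalPoly (lam + mu) (coeff (evalPoly lam (coeff x y)) z)
        + sg (i * j) • evalPoly mu (coeff y (evalPoly lam (coeff x z)))

namespace LieConformalSuperAlgebra

variable {L : Type*} [AddCommGroup L] [Module ℂ L]

/-- The λ-bracket `[x_λ y]`, evaluated at `lam : ℂ`. -/
def brk (S : LieConformalSuperAlgebra L) (lam : ℂ) (x y : L) : L :=
  evalPoly lam (S.coeff x y)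

/-- The λ-bracket with an operator (e.g. `−λ−μ−∂`) substituted for the formal variable. -/
def brkOp (S : LieConformalSuperAlgebra L) (T : Module.End ℂ L) (x y : L) : L :=
  evalPolyOp T (S.coeff x y)

/-- The center `Z(L) = {x : [x_λ y] = 0 for all λ, y}`. -/
def center (S : LieConformalSuperAlgebra L) : Set L :=
  {x : L | ∀ (lam : ℂ) (y : L), S.brk lam x y = 0}

/-- `L` is perfect: it is spanned, as a `ℂ[∂]`-module, by the coefficients of all
brackets `[x_λ y]`. -/
def IsPerfect (S : LieConformalSuperAlgebra L) : Prop :=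
  Submodule.span ℂ
    {z : L | ∃ (x y : L) (n k : ℕ), z = ((S.D : Module.End ℂ L) ^ k) (S.coeff x y n)} = ⊤

end LieConformalSuperAlgebra

/-- A conformal super-biderivation `φ_λ(x,y) = ∑ₙ λ^n • coeff x y n` of parity `parity`:
a conformal bilinear map, compatible with the grading shifted by `parity`, which is
skew-symmetric and a conformal derivation in its second argument. -/
structure SuperBiderivation {L : Type*} [AddCommGroup L] [Module ℂ L]
    (S : LieConformalSuperAlgebra L) where
  coeff : L →ₗ[ℂ] L →ₗ[ℂ] (ℕ →₀ L)
  parity : ZMod 2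
  mem : ∀ (i j : ZMod 2) (x y : L), x ∈ S.grading i → y ∈ S.grading j →
    ∀ n, coeff x y n ∈ S.grading (i + j + parity)
  /-- `φ_λ(∂x, y) = −λ φ_λ(x, y)` -/
  conf₁ : ∀ (lam : ℂ) (x y : L),
    evalPoly lam (coeff (S.D x) y) = (-lam) • evalPoly lam (coeff x y)
  /-- `φ_λ(x, ∂y) = (∂+λ) φ_λ(x, y)` -/
  conf₂ : ∀ (lam : ℂ) (x y : L),
    evalPoly lam (coeff x (S.D y))
      = S.D (evalPoly lam (coeff x y)) + lam • evalPoly lam (coeff x y)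
  /-- `φ_λ(x,y) = −(−1)^{|x||y|} φ_{−∂−λ}(y,x)` -/
  skew : ∀ (i j : ZMod 2) (x y : L), x ∈ S.grading i → y ∈ S.grading j → ∀ lam : ℂ,
    evalPoly lam (coeff x y)
      = -(sg (i * j)) • evalPolyOp ((-lam) • (1 : Module.End ℂ L) - S.D) (coeff y x)
  /-- `φ_λ(x,[y_μ z]) = [φ_λ(x,y)_{λ+μ} z] + (−1)^{|x||y|} [y_μ φ_λ(x,z)]` -/
  deriv : ∀ (i j : ZMod 2) (x y z : L), x ∈ S.grading i → y ∈ S.grading j → ∀ lam mu : ℂ,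
    evalPoly lam (coeff x (S.brk mu y z))
      = S.brk (lam + mu) (evalPoly lam (coeff x y)) z
        + sg (i * j) • S.brk mu y (evalPoly lam (coeff x z))

/-- `φ_λ(x, y)` evaluated at `lam : ℂ`. -/
def SuperBiderivation.app {L : Type*} [AddCommGroup L] [Module ℂ L]
    {S : LieConformalSuperAlgebra L} (φ : SuperBiderivation S) (lam : ℂ) (x y : L) : L :=
  evalPoly lam (φ.coeff x y)

/-- An element of the centroid `Cent(L)`: a homogeneous conformal linear map
`α_λ : L → ℂ[λ] ⊗ L` of parity `parity` with `α_λ([x_μ y]) = (−1)^{|x||α|} [x_μ α_λ(y)]`. -/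
structure CentroidElem {L : Type*} [AddCommGroup L] [Module ℂ L]
    (S : LieConformalSuperAlgebra L) where
  coeff : L →ₗ[ℂ] (ℕ →₀ L)
  parity : ZMod 2
  mem : ∀ (i : ZMod 2) (x : L), x ∈ S.grading i → ∀ n, coeff x n ∈ S.grading (i + parity)
  /-- conformal linearity: `α_λ(∂x) = (∂+λ) α_λ(x)` -/
  conf : ∀ (lam : ℂ) (x : L),
    evalPoly lam (coeff (S.D x)) = S.D (evalPoly lam (coeff x)) + lam • evalPoly lam (coeff x)
  /-- `α_λ([x_μ y]) = (−1)^{|x||α|} [x_μ α_λ(y)]` -/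
  central : ∀ (i : ZMod 2) (x y : L), x ∈ S.grading i → ∀ lam mu : ℂ,
    evalPoly lam (coeff (S.brk mu x y)) = sg (i * parity) • S.brk mu x (evalPoly lam (coeff y))

/-- `α_λ(x)` evaluated at `lam : ℂ`. -/
def CentroidElem.app {L : Type*} [AddCommGroup L] [Module ℂ L]
    {S : LieConformalSuperAlgebra L} (α : CentroidElem S) (lam : ℂ) (x : L) : L :=
  evalPoly lam (α.coeff x)

/-- A homogeneous linear super-commuting map: a conformal linear map `Ψ_λ` of parity
`parity`, shifting the grading by `parity`, with `[Ψ_λ(u)_{λ+μ} u] = 0` for all `u`. -/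
structure SuperCommutingMap {L : Type*} [AddCommGroup L] [Module ℂ L]
    (S : LieConformalSuperAlgebra L) where
  coeff : L →ₗ[ℂ] (ℕ →₀ L)
  parity : ZMod 2
  mem : ∀ (i : ZMod 2) (x : L), x ∈ S.grading i → ∀ n, coeff x n ∈ S.grading (i + parity)
  /-- conformal linearity: `Ψ_λ(∂x) = (∂+λ) Ψ_λ(x)` -/
  conf : ∀ (lam : ℂ) (x : L),
    evalPoly lam (coeff (S.D x)) = S.D (evalPoly lam (coeff x)) + lam • evalPoly lam (coeff x)
  /-- `[Ψ_λ(u)_{λ+μ} u] = 0` -/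
  commuting : ∀ (lam mu : ℂ) (u : L), S.brk (lam + mu) (evalPoly lam (coeff u)) u = 0

/-- `Ψ_λ(x)` evaluated at `lam : ℂ`. -/
def SuperCommutingMap.app {L : Type*} [AddCommGroup L] [Module ℂ L]
    {S : LieConformalSuperAlgebra L} (Ψ : SuperCommutingMap S) (lam : ℂ) (x : L) : L :=
  evalPoly lam (Ψ.coeff x)

/-- The `t`-th component map `L ⊗ A → L` relative to a basis `B` of `A`:
if `w = ∑ₜ wₜ ⊗ bₜ` then `tensorComponent B t w = wₜ`. -/
def tensorComponent {L : Type*} [AddCommGroup L] [Module ℂ L]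
    {A : Type*} [CommRing A] [Algebra ℂ A] {ι : Type*} (B : Module.Basis ι ℂ A) (t : ι) :
    L ⊗[ℂ] A →ₗ[ℂ] L :=
  (TensorProduct.rid ℂ L).toLinearMap ∘ₗ
    TensorProduct.map (LinearMap.id : L →ₗ[ℂ] L) (B.coord t)

/-! ### Auxiliary lemmas -/

section Aux

variable {L : Type*} [AddCommGroup L] [Module ℂ L]

/-- `evalPoly lam` as a linear map. -/
def evalPolyLM (lam : ℂ) : (ℕ →₀ L) →ₗ[ℂ] L :=
  Finsupp.lsum ℂ fun n => (lam ^ n) • (LinearMap.id : L →ₗ[ℂ] L)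

theorem evalPoly_eq (lam : ℂ) (f : ℕ →₀ L) : evalPoly lam f = evalPolyLM lam f := by
  simp [evalPoly, evalPolyLM, Finsupp.lsum_apply, Finsupp.sum]

theorem evalPoly_add (lam : ℂ) (f g : ℕ →₀ L) :
    evalPoly lam (f + g) = evalPoly lam f + evalPoly lam g := by
  simp [evalPoly_eq]

theorem evalPoly_zero (lam : ℂ) : evalPoly lam (0 : ℕ →₀ L) = 0 := by
  simp [evalPoly_eq]

theorem evalPoly_smul (lam c : ℂ) (f : ℕ →₀ L) :
    evalPoly lam (c • f) = c • evalPoly lam f := by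
  simp [evalPoly_eq]

theorem evalPoly_mapRange {M : Type*} [AddCommGroup M] [Module ℂ M]
    (f : L →ₗ[ℂ] M) (lam : ℂ) (p : ℕ →₀ L) :
    evalPoly lam (Finsupp.mapRange.linearMap f p) = f (evalPoly lam p) := by
  induction p using Finsupp.induction_linear with
  | zero => simp [evalPoly_zero]
  | add p q hp hq => rw [map_add, evalPoly_add, hp, hq, evalPoly_add, map_add]
  | single n c =>
      simp [evalPoly_eq, evalPolyLM, Finsupp.mapRange_single, Finsupp.lsum_apply,
        Finsupp.sum_single_index]

namespace LieConformalSuperAlgebra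

variable (S : LieConformalSuperAlgebra L)

theorem brk_add_left (lam : ℂ) (x x' y : L) :
    S.brk lam (x + x') y = S.brk lam x y + S.brk lam x' y := by
  simp [brk, map_add, LinearMap.add_apply, evalPoly_add]

theorem brk_add_right (lam : ℂ) (x y y' : L) :
    S.brk lam x (y + y') = S.brk lam x y + S.brk lam x y' := by
  simp [brk, map_add, evalPoly_add]

theorem brk_smul_left (lam : ℂ) (c : ℂ) (x y : L) :
    S.brk lam (c • x) y = c • S.brk lam x y := by
  simp [brk, map_smul, LinearMap.smul_apply, evalPoly_smul]

theorem brk_smul_right (lam : ℂ) (c : ℂ) (x y : L) :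
    S.brk lam x (c • y) = c • S.brk lam x y := by
  simp [brk, map_smul, evalPoly_smul]

@[simp] theorem brk_zero_left (lam : ℂ) (y : L) : S.brk lam 0 y = 0 := by
  simp [brk, map_zero, LinearMap.zero_apply, evalPoly_zero]

@[simp] theorem brk_zero_right (lam : ℂ) (x : L) : S.brk lam x 0 = 0 := by
  simp [brk, map_zero, evalPoly_zero]

theorem brk_sub_left (lam : ℂ) (x x' y : L) :
    S.brk lam (x - x') y = S.brk lam x y - S.brk lam x' y := by
  simp [brk, map_sub, LinearMap.sub_apply, evalPoly_eq, map_sub]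

end LieConformalSuperAlgebra

theorem SuperCommutingMap.app_add {S : LieConformalSuperAlgebra L}
    (Ψ : SuperCommutingMap S) (lam : ℂ) (w z : L) :
    Ψ.app lam (w + z) = Ψ.app lam w + Ψ.app lam z := by
  simp [SuperCommutingMap.app, map_add, evalPoly_add]

@[simp] theorem SuperCommutingMap.app_zero {S : LieConformalSuperAlgebra L}
    (Ψ : SuperCommutingMap S) (lam : ℂ) : Ψ.app lam (0 : L) = 0 := by
  simp [SuperCommutingMap.app, map_zero, evalPoly_zero]

variable {A : Type*} [CommRing A] [Algebra ℂ A] {ι : Type*}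

theorem tensorComponent_tmul (B : Module.Basis ι ℂ A) (t : ι) (x : L) (a : A) :
    tensorComponent B t (x ⊗ₜ[ℂ] a) = B.coord t a • x := by
  simp [tensorComponent]

theorem tensorComponent_ext (B : Module.Basis ι ℂ A) {w : L ⊗[ℂ] A}
    (h : ∀ t, tensorComponent B t w = 0) : w = 0 := by
  classical
  let e : (L ⊗[ℂ] A) ≃ₗ[ℂ] (ι →₀ L) :=
    (LinearEquiv.lTensor L B.repr).trans (TensorProduct.finsuppScalarRight ℂ ℂ L ι)
  have he : ∀ (w : L ⊗[ℂ] A) (t : ι), e w t = tensorComponent B t w := by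
    intro w
    induction w using TensorProduct.induction_on with
    | zero => simp
    | tmul x a =>
        intro t
        simp [e, tensorComponent_tmul, TensorProduct.finsuppScalarRight_apply_tmul_apply,
          Module.Basis.coord_apply]
    | add u v hu hv => intro t; simp [map_add, hu, hv]
  have h0 : e w = 0 := by
    ext t
    rw [he]
    simpa using h t
  exact (LinearEquiv.map_eq_zero_iff e).mp h0

theorem tensorComponent_ext' (B : Module.Basis ι ℂ A) {w₁ w₂ : L ⊗[ℂ] A}
    (h : ∀ t, tensorComponent B t w₁ = tensorComponent B t w₂) : w₁ = w₂ := by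
  have : w₁ - w₂ = 0 := by
    apply tensorComponent_ext B
    intro t
    rw [map_sub, h, sub_self]
  exact sub_eq_zero.mp this

theorem tensorComponent_mem_grading (B : Module.Basis ι ℂ A) (t : ι)
    (P : Submodule ℂ L) {w : L ⊗[ℂ] A}
    (hw : w ∈ LinearMap.range
      (TensorProduct.map P.subtype (LinearMap.id : A →ₗ[ℂ] A))) :
    tensorComponent B t w ∈ P := by
  obtain ⟨w', rfl⟩ := hw
  induction w' using TensorProduct.induction_on with
  | zero => simp
  | tmul x a =>
      rw [TensorProduct.map_tmul, tensorComponent_tmul]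
      exact P.smul_mem _ x.2
  | add u v hu hv => rw [map_add, map_add]; exact P.add_mem hu hv

theorem tensorComponent_D
    (S : LieConformalSuperAlgebra L) (T : LieConformalSuperAlgebra (L ⊗[ℂ] A))
    (hD : ∀ (x : L) (a : A), T.D (x ⊗ₜ[ℂ] a) = S.D x ⊗ₜ[ℂ] a)
    (B : Module.Basis ι ℂ A) (t : ι) (W : L ⊗[ℂ] A) :
    tensorComponent B t (T.D W) = S.D (tensorComponent B t W) := by
  induction W using TensorProduct.induction_on with
  | zero => simp
  | tmul x a => rw [hD, tensorComponent_tmul, tensorComponent_tmul, map_smul]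
  | add u v hu hv => rw [map_add, map_add, map_add, map_add, hu, hv]

theorem tensorComponent_brk_left
    (S : LieConformalSuperAlgebra L) (T : LieConformalSuperAlgebra (L ⊗[ℂ] A))
    (hbrk : ∀ (lam : ℂ) (x y : L) (a b : A),
      T.brk lam (x ⊗ₜ[ℂ] a) (y ⊗ₜ[ℂ] b) = (S.brk lam x y) ⊗ₜ[ℂ] (a * b))
    (B : Module.Basis ι ℂ A) (t : ι) (nu : ℂ) (W : L ⊗[ℂ] A) (y : L) :
    tensorComponent B t (T.brk nu W (y ⊗ₜ[ℂ] 1))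
      = S.brk nu (tensorComponent B t W) y := by
  induction W using TensorProduct.induction_on with
  | zero => simp
  | tmul w e =>
      rw [hbrk, mul_one, tensorComponent_tmul, tensorComponent_tmul, S.brk_smul_left]
  | add u v hu hv =>
      rw [T.brk_add_left, map_add, map_add, hu, hv, S.brk_add_left]

theorem tensorComponent_brk_right
    (S : LieConformalSuperAlgebra L) (T : LieConformalSuperAlgebra (L ⊗[ℂ] A))
    (hbrk : ∀ (lam : ℂ) (x y : L) (a b : A),
      T.brk lam (x ⊗ₜ[ℂ] a) (y ⊗ₜ[ℂ] b) = (S.brk lam x y) ⊗ₜ[ℂ] (a * b))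
    (B : Module.Basis ι ℂ A) (t : ι) (nu : ℂ) (x : L) (W : L ⊗[ℂ] A) :
    tensorComponent B t (T.brk nu (x ⊗ₜ[ℂ] 1) W)
      = S.brk nu x (tensorComponent B t W) := by
  induction W using TensorProduct.induction_on with
  | zero => simp
  | tmul w e =>
      rw [hbrk, one_mul, tensorComponent_tmul, tensorComponent_tmul, S.brk_smul_right]
  | add u v hu hv =>
      rw [T.brk_add_right, map_add, map_add, hu, hv, S.brk_add_right]

/-- Multiplication by `d ∈ A` on the second tensor factor. -/
def mulRight' (L : Type*) [AddCommGroup L] [Module ℂ L]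
    {A : Type*} [CommRing A] [Algebra ℂ A] (d : A) :
    (L ⊗[ℂ] A) →ₗ[ℂ] (L ⊗[ℂ] A) :=
  LinearMap.lTensor L (LinearMap.mulLeft ℂ d)

@[simp] theorem mulRight'_tmul (d : A) (x : L) (a : A) :
    mulRight' L d (x ⊗ₜ[ℂ] a) = x ⊗ₜ[ℂ] (d * a) := by
  simp [mulRight']

theorem mulRight'_mulRight' (d e : A) (W : L ⊗[ℂ] A) :
    mulRight' L d (mulRight' L e W) = mulRight' L (d * e) W := by
  induction W using TensorProduct.induction_on with
  | zero => simp
  | tmul x a => simp [mul_assoc]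
  | add u v hu hv => simp only [map_add, hu, hv]

theorem mulRight'_brk_left
    (S : LieConformalSuperAlgebra L) (T : LieConformalSuperAlgebra (L ⊗[ℂ] A))
    (hbrk : ∀ (lam : ℂ) (x y : L) (a b : A),
      T.brk lam (x ⊗ₜ[ℂ] a) (y ⊗ₜ[ℂ] b) = (S.brk lam x y) ⊗ₜ[ℂ] (a * b))
    (d : A) (nu : ℂ) (W z : L ⊗[ℂ] A) :
    T.brk nu (mulRight' L d W) z = mulRight' L d (T.brk nu W z) := by
  induction W using TensorProduct.induction_on with
  | zero => simp
  | tmul w e =>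
      induction z using TensorProduct.induction_on with
      | zero => simp
      | tmul v b => rw [mulRight'_tmul, hbrk, hbrk, mulRight'_tmul, mul_assoc]
      | add z1 z2 h1 h2 => rw [T.brk_add_right, T.brk_add_right, map_add, h1, h2]
  | add W1 W2 h1 h2 => rw [map_add, T.brk_add_left, T.brk_add_left, map_add, h1, h2]

theorem mulRight'_brk_right
    (S : LieConformalSuperAlgebra L) (T : LieConformalSuperAlgebra (L ⊗[ℂ] A))
    (hbrk : ∀ (lam : ℂ) (x y : L) (a b : A),
      T.brk lam (x ⊗ₜ[ℂ] a) (y ⊗ₜ[ℂ] b) = (S.brk lam x y) ⊗ₜ[ℂ] (a * b))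
    (d : A) (nu : ℂ) (W z : L ⊗[ℂ] A) :
    T.brk nu W (mulRight' L d z) = mulRight' L d (T.brk nu W z) := by
  induction z using TensorProduct.induction_on with
  | zero => simp
  | tmul v b =>
      induction W using TensorProduct.induction_on with
      | zero => simp
      | tmul w e => rw [mulRight'_tmul, hbrk, hbrk, mulRight'_tmul, mul_left_comm]
      | add W1 W2 h1 h2 => rw [T.brk_add_left, T.brk_add_left, map_add, h1, h2]
  | add z1 z2 h1 h2 => rw [map_add, T.brk_add_right, T.brk_add_right, map_add, h1, h2]

/-- The `t`-th component (relative to basis `B`, around `1 ∈ A`) of a super-commuting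
map on the current algebra is a super-commuting map on `L`. -/
def componentCommutingMap
    (S : LieConformalSuperAlgebra L) (T : LieConformalSuperAlgebra (L ⊗[ℂ] A))
    (hD : ∀ (x : L) (a : A), T.D (x ⊗ₜ[ℂ] a) = S.D x ⊗ₜ[ℂ] a)
    (hgr : ∀ i : ZMod 2, T.grading i
      = LinearMap.range
          (TensorProduct.map (S.grading i).subtype (LinearMap.id : A →ₗ[ℂ] A)))
    (hbrk : ∀ (lam : ℂ) (x y : L) (a b : A),
      T.brk lam (x ⊗ₜ[ℂ] a) (y ⊗ₜ[ℂ] b) = (S.brk lam x y) ⊗ₜ[ℂ] (a * b))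
    (B : Module.Basis ι ℂ A) (Ψ : SuperCommutingMap T) (t : ι) :
    SuperCommutingMap S where
  coeff := Finsupp.mapRange.linearMap (tensorComponent B t) ∘ₗ Ψ.coeff ∘ₗ
      ((TensorProduct.mk ℂ L A).flip 1)
  parity := Ψ.parity
  mem := by
    intro i x hx n
    have hx1 : x ⊗ₜ[ℂ] (1 : A) ∈ T.grading i := by
      rw [hgr]
      exact ⟨(⟨x, hx⟩ : S.grading i) ⊗ₜ[ℂ] (1 : A), by
        rw [TensorProduct.map_tmul]; rfl⟩
    have := Ψ.mem i (x ⊗ₜ[ℂ] 1) hx1 n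
    rw [hgr] at this
    simp only [LinearMap.coe_comp, Function.comp_apply,
      Finsupp.mapRange.linearMap_apply, Finsupp.mapRange_apply]
    exact tensorComponent_mem_grading B t _ this
  conf := by
    intro lam x
    simp only [LinearMap.coe_comp, Function.comp_apply, evalPoly_mapRange]
    have hx : ((TensorProduct.mk ℂ L A).flip 1) (S.D x) = T.D (x ⊗ₜ[ℂ] 1) := by
      rw [hD]; rfl
    rw [hx, Ψ.conf lam (x ⊗ₜ[ℂ] 1), map_add, map_smul,
      tensorComponent_D S T hD B t]
    rfl
  commuting := by
    intro lam mu u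
    simp only [LinearMap.coe_comp, Function.comp_apply, evalPoly_mapRange]
    have h := Ψ.commuting lam mu (u ⊗ₜ[ℂ] 1)
    have key := tensorComponent_brk_left S T hbrk B t (lam + mu)
      (evalPoly lam (Ψ.coeff (u ⊗ₜ[ℂ] 1))) u
    have hflip : ((TensorProduct.mk ℂ L A).flip 1) u = u ⊗ₜ[ℂ] 1 := rfl
    rw [hflip, ← key, h, map_zero]

theorem componentCommutingMap_app
    (S : LieConformalSuperAlgebra L) (T : LieConformalSuperAlgebra (L ⊗[ℂ] A))
    (hD : ∀ (x : L) (a : A), T.D (x ⊗ₜ[ℂ] a) = S.D x ⊗ₜ[ℂ] a)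
    (hgr : ∀ i : ZMod 2, T.grading i
      = LinearMap.range
          (TensorProduct.map (S.grading i).subtype (LinearMap.id : A →ₗ[ℂ] A)))
    (hbrk : ∀ (lam : ℂ) (x y : L) (a b : A),
      T.brk lam (x ⊗ₜ[ℂ] a) (y ⊗ₜ[ℂ] b) = (S.brk lam x y) ⊗ₜ[ℂ] (a * b))
    (B : Module.Basis ι ℂ A) (Ψ : SuperCommutingMap T) (t : ι) (lam : ℂ) (x : L) :
    (componentCommutingMap S T hD hgr hbrk B Ψ t).app lam x
      = tensorComponent B t (Ψ.app lam (x ⊗ₜ[ℂ] 1)) := by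
  simp only [componentCommutingMap, SuperCommutingMap.app, LinearMap.coe_comp,
    Function.comp_apply, evalPoly_mapRange]
  rfl

end Aux
/-- Suppose `Z(L) = 0` and every linear super-commuting map on `L`
belongs to `Cent(L)`.  Then every homogeneous linear super-commuting map `Ψ` on the
current algebra `L ⊗ A` belongs to `Cent(L ⊗ A)`; in particular
`Ψ_λ[(u⊗a)_μ (v⊗b)] = (−1)^{|Ψ||u|} [(u⊗a)_μ Ψ_λ(v⊗b)]`. -/
theorem current_commutingMap_is_centroid {L : Type*} [AddCommGroup L] [Module ℂ L]
    (S : LieConformalSuperAlgebra L)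
    {A : Type*} [CommRing A] [Algebra ℂ A]
    (T : LieConformalSuperAlgebra (L ⊗[ℂ] A))
    (hD : ∀ (x : L) (a : A), T.D (x ⊗ₜ[ℂ] a) = S.D x ⊗ₜ[ℂ] a)
    (hgr : ∀ i : ZMod 2, T.grading i
      = LinearMap.range
          (TensorProduct.map (S.grading i).subtype (LinearMap.id : A →ₗ[ℂ] A)))
    (hbrk : ∀ (lam : ℂ) (x y : L) (a b : A),
      T.brk lam (x ⊗ₜ[ℂ] a) (y ⊗ₜ[ℂ] b) = (S.brk lam x y) ⊗ₜ[ℂ] (a * b))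
    (hZ : ∀ x : L, x ∈ S.center → x = 0)
    {ι : Type*} (B : Module.Basis ι ℂ A)
    (hcent : ∀ Ψ' : SuperCommutingMap S, ∀ (i : ZMod 2) (x y : L), x ∈ S.grading i →
      ∀ lam mu : ℂ,
        Ψ'.app lam (S.brk mu x y) = sg (i * Ψ'.parity) • S.brk mu x (Ψ'.app lam y))
    (Ψ : SuperCommutingMap T) :
    (∀ (i : ZMod 2) (w z : L ⊗[ℂ] A), w ∈ T.grading i → ∀ lam mu : ℂ,
      Ψ.app lam (T.brk mu w z) = sg (i * Ψ.parity) • T.brk mu w (Ψ.app lam z)) ∧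
    (∀ (i j : ZMod 2) (u v : L), u ∈ S.grading i → v ∈ S.grading j →
      ∀ (a b : A) (lam mu : ℂ),
        Ψ.app lam (T.brk mu (u ⊗ₜ[ℂ] a) (v ⊗ₜ[ℂ] b))
          = sg (i * Ψ.parity) • T.brk mu (u ⊗ₜ[ℂ] a) (Ψ.app lam (v ⊗ₜ[ℂ] b))) := by
  classical
  -- Polarization of the super-commuting identity.
  have pol : ∀ (lam nu : ℂ) (w z : L ⊗[ℂ] A),
      T.brk nu (Ψ.app lam w) z = - T.brk nu (Ψ.app lam z) w := by
    intro lam nu w z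
    have h : T.brk nu (Ψ.app lam (w + z)) (w + z) = 0 := by
      have := Ψ.commuting lam (nu - lam) (w + z)
      rwa [show lam + (nu - lam) = nu by ring] at this
    have hw : T.brk nu (Ψ.app lam w) w = 0 := by
      have := Ψ.commuting lam (nu - lam) w
      rwa [show lam + (nu - lam) = nu by ring] at this
    have hz : T.brk nu (Ψ.app lam z) z = 0 := by
      have := Ψ.commuting lam (nu - lam) z
      rwa [show lam + (nu - lam) = nu by ring] at this
    rw [Ψ.app_add, T.brk_add_left, T.brk_add_right, T.brk_add_right, hw, hz,
      zero_add, add_zero] at h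
    exact eq_neg_of_add_eq_zero_left h
  have CbrkL := tensorComponent_brk_left S T hbrk B
  have CbrkR := tensorComponent_brk_right S T hbrk B
  -- Detecting central elements of the current algebra.
  have hZT : ∀ Θ : L ⊗[ℂ] A, (∀ (nu : ℂ) (y : L), T.brk nu Θ (y ⊗ₜ[ℂ] 1) = 0) → Θ = 0 := by
    intro Θ h
    apply tensorComponent_ext B
    intro t
    apply hZ
    intro nu y
    have h2 := CbrkL t nu Θ y
    rw [h nu y, map_zero] at h2
    exact h2.symm
  -- `Ψ` commutes with multiplication by elements of `A`.
  have claimB : ∀ (lam : ℂ) (d : A) (w : L ⊗[ℂ] A),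
      Ψ.app lam (mulRight' L d w) = mulRight' L d (Ψ.app lam w) := by
    intro lam d w
    have key : ∀ (nu : ℂ) (y : L),
        T.brk nu (Ψ.app lam (mulRight' L d w) - mulRight' L d (Ψ.app lam w))
          (y ⊗ₜ[ℂ] 1) = 0 := by
      intro nu y
      rw [T.brk_sub_left]
      have h1 : T.brk nu (Ψ.app lam (mulRight' L d w)) (y ⊗ₜ[ℂ] 1)
          = mulRight' L d (T.brk nu (Ψ.app lam w) (y ⊗ₜ[ℂ] 1)) := by
        rw [pol lam nu (mulRight' L d w) (y ⊗ₜ[ℂ] 1),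
          mulRight'_brk_right S T hbrk d nu _ w,
          pol lam nu w (y ⊗ₜ[ℂ] 1), map_neg]
      rw [h1, mulRight'_brk_left S T hbrk, sub_self]
    exact sub_eq_zero.mp (hZT _ key)
  -- The base case of the centroid property, over `1 ⊗ 1`.
  have claimC : ∀ (i : ZMod 2) (u : L), u ∈ S.grading i → ∀ (y : L) (lam mu : ℂ),
      Ψ.app lam (T.brk mu (u ⊗ₜ[ℂ] 1) (y ⊗ₜ[ℂ] 1))
        = sg (i * Ψ.parity) • T.brk mu (u ⊗ₜ[ℂ] 1) (Ψ.app lam (y ⊗ₜ[ℂ] 1)) := by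
    intro i u hu y lam mu
    apply tensorComponent_ext' B
    intro t
    have happ := componentCommutingMap_app S T hD hgr hbrk B Ψ t
    have hc := hcent (componentCommutingMap S T hD hgr hbrk B Ψ t) i u y hu lam mu
    have hpar : (componentCommutingMap S T hD hgr hbrk B Ψ t).parity = Ψ.parity := rfl
    have hbu : T.brk mu (u ⊗ₜ[ℂ] 1) (y ⊗ₜ[ℂ] 1) = (S.brk mu u y) ⊗ₜ[ℂ] 1 := by
      rw [hbrk, mul_one]
    rw [hbu]
    calc tensorComponent B t (Ψ.app lam ((S.brk mu u y) ⊗ₜ[ℂ] 1))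
        = (componentCommutingMap S T hD hgr hbrk B Ψ t).app lam (S.brk mu u y) :=
          (happ lam _).symm
      _ = sg (i * (componentCommutingMap S T hD hgr hbrk B Ψ t).parity)
            • S.brk mu u ((componentCommutingMap S T hD hgr hbrk B Ψ t).app lam y) := hc
      _ = sg (i * Ψ.parity)
            • S.brk mu u (tensorComponent B t (Ψ.app lam (y ⊗ₜ[ℂ] 1))) := by
          rw [hpar, happ]
      _ = sg (i * Ψ.parity) • tensorComponent B t
            (T.brk mu (u ⊗ₜ[ℂ] 1) (Ψ.app lam (y ⊗ₜ[ℂ] 1))) := by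
          rw [CbrkR]
      _ = tensorComponent B t (sg (i * Ψ.parity)
            • T.brk mu (u ⊗ₜ[ℂ] 1) (Ψ.app lam (y ⊗ₜ[ℂ] 1))) := (map_smul _ _ _).symm
  -- The centroid property for all homogeneous `w`.
  have main : ∀ (i : ZMod 2) (w z : L ⊗[ℂ] A), w ∈ T.grading i → ∀ lam mu : ℂ,
      Ψ.app lam (T.brk mu w z) = sg (i * Ψ.parity) • T.brk mu w (Ψ.app lam z) := by
    intro i w z hw lam mu
    rw [hgr] at hw
    obtain ⟨w', rfl⟩ := hw
    induction w' using TensorProduct.induction_on with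
    | zero => simp
    | add w1 w2 h1 h2 =>
        rw [map_add, T.brk_add_left, Ψ.app_add, h1, h2, T.brk_add_left, smul_add]
    | tmul x a =>
        have hx : (TensorProduct.map (S.grading i).subtype LinearMap.id)
            (x ⊗ₜ[ℂ] a) = (x : L) ⊗ₜ[ℂ] a := by simp
        rw [hx]
        induction z using TensorProduct.induction_on with
        | zero => simp
        | add z1 z2 g1 g2 =>
            rw [T.brk_add_right, Ψ.app_add, g1, g2, Ψ.app_add, T.brk_add_right, smul_add]
        | tmul v b =>
            have e1 : T.brk mu ((x : L) ⊗ₜ[ℂ] a) (v ⊗ₜ[ℂ] b)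
                = mulRight' L (a * b) (T.brk mu ((x : L) ⊗ₜ[ℂ] 1) (v ⊗ₜ[ℂ] 1)) := by
              rw [hbrk, hbrk, mul_one, mulRight'_tmul, mul_one]
            have e2 : Ψ.app lam (v ⊗ₜ[ℂ] b) = mulRight' L b (Ψ.app lam (v ⊗ₜ[ℂ] 1)) := by
              rw [← claimB, mulRight'_tmul, mul_one]
            have e3 : mulRight' L (a * b)
                  (T.brk mu ((x : L) ⊗ₜ[ℂ] 1) (Ψ.app lam (v ⊗ₜ[ℂ] 1)))
                = T.brk mu ((x : L) ⊗ₜ[ℂ] a)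
                  (mulRight' L b (Ψ.app lam (v ⊗ₜ[ℂ] 1))) := by
              rw [← mulRight'_mulRight' a b,
                ← mulRight'_brk_right S T hbrk b mu ((x : L) ⊗ₜ[ℂ] 1) _,
                ← mulRight'_brk_left S T hbrk a mu ((x : L) ⊗ₜ[ℂ] 1) _,
                mulRight'_tmul, mul_one]
            rw [e1, claimB, claimC i (x : L) x.2 v lam mu, map_smul, e3, ← e2]
  refine ⟨main, ?_⟩
  intro i j u v hu hv a b lam mu
  have hmem : u ⊗ₜ[ℂ] a ∈ T.grading i := by
    rw [hgr]
    exact ⟨(⟨u, hu⟩ : S.grading i) ⊗ₜ[ℂ] a, by simp⟩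
  exact main i (u ⊗ₜ[ℂ] a) (v ⊗ₜ[ℂ] b) hmem lam mu
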